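/- Let $\Lambda \subset \mathbb{R}^d$ be bounded with finite positive measure, let $(f_n)_{n\ge1}$ be functions in $L^2(\Lambda)$ such that $\sum_{n=1}^\infty |f_n(x)|^2 \le A^2$ for all $x \in \Lambda$. Let $(t_n)_{n\ge2}$ be square-summable scalars and, for $u>0$, let $t_u = e^{i\theta}\sqrt{\rho + u^2/\gamma}$ with fixed $\rho \ge 0$, $\theta \in [0,2\pi)$, $\gamma > 0$. Assume moreover $\|f_1\|_{L^2} > 0$. Define $\varphi_u = t_u f_1 + \sum_{n\ge2} t_n f_n$. Then $\sup_{x\in\Lambda} |\varphi_u(x)/\|\varphi_u\|_{L^2} - e^{i\theta} f_1(x)/\|f_1\|_{L^2}| \to 0$ as $u \to \infty$. -/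

import Mathlib

open MeasureTheory Filter Complex

set_option maxHeartbeats 1000000 in
/-- Deterministic (pathwise) version of Proposition 2: with a leading mode `f₁`,
tail modes `fn n` satisfying the uniform pointwise variance bound
`‖f₁ x‖² + ∑ ‖fn n x‖² ≤ A²`, square-summable tail coefficients `t n`, and
conditioned leading coefficient `t_u = e^{iθ}√(ρ + u²/γ)`, the `L²`-normalized
field `φ_u` converges uniformly on `Λ` to the non-random profile
`e^{iθ} f₁/‖f₁‖₂` as `u → ∞`. -/
theorem stmt_12 {d : ℕ} (Λ : Set (EuclideanSpace ℝ (Fin d)))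
    (hΛmeas : MeasurableSet Λ) (hΛbdd : Bornology.IsBounded Λ)
    (hΛpos : 0 < volume Λ)
    (f₁ : EuclideanSpace ℝ (Fin d) → ℂ) (fn : ℕ → EuclideanSpace ℝ (Fin d) → ℂ)
    (hf₁meas : Measurable f₁) (hfnmeas : ∀ n, Measurable (fn n))
    (A : ℝ) (hA : 0 < A)
    (hptsum : ∀ x ∈ Λ, Summable fun n => ‖fn n x‖ ^ 2)
    (hptbound : ∀ x ∈ Λ, ‖f₁ x‖ ^ 2 + (∑' n, ‖fn n x‖ ^ 2) ≤ A ^ 2)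
    (t : ℕ → ℂ) (ht : Summable fun n => ‖t n‖ ^ 2)
    (ρ θ γ : ℝ) (hρ : 0 ≤ ρ) (hθ : θ ∈ Set.Ico (0 : ℝ) (2 * Real.pi)) (hγ : 0 < γ)
    (tu : ℝ → ℂ)
    (htu : ∀ u, tu u = Complex.exp (θ * I) * (Real.sqrt (ρ + u ^ 2 / γ) : ℂ))
    (φ : ℝ → EuclideanSpace ℝ (Fin d) → ℂ)
    (hφ : ∀ u x, φ u x = tu u * f₁ x + ∑' n, t n * fn n x)
    (nrm : (EuclideanSpace ℝ (Fin d) → ℂ) → ℝ)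
    (hnrm : ∀ h, nrm h = Real.sqrt (∫ x in Λ, ‖h x‖ ^ 2 ∂volume))
    (hf₁pos : 0 < nrm f₁) :
    ∀ ε > 0, ∃ U : ℝ, ∀ u ≥ U, ∀ x ∈ Λ,
      ‖φ u x / (nrm (φ u) : ℂ)
        - Complex.exp (θ * I) * f₁ x / (nrm f₁ : ℂ)‖ ≤ ε := by
  intro ε hε
  set g : EuclideanSpace ℝ (Fin d) → ℂ := fun x => ∑' n, t n * fn n x with hgdef
  set T : ℝ := ∑' n, ‖t n‖ ^ 2 with hTdef
  have hT0 : (0:ℝ) ≤ T := tsum_nonneg fun n => sq_nonneg _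
  set B : ℝ := (T + A ^ 2) / 2 + 1 with hBdef
  clear_value g T B
  have hB0 : (0:ℝ) < B := by rw [hBdef]; linarith [hT0, sq_nonneg A]
  -- pointwise bound on f₁
  have hk : ∀ x ∈ Λ, ‖f₁ x‖ ≤ A := by
    intro x hx
    have h1 := hptbound x hx
    have h2 : (0:ℝ) ≤ ∑' n, ‖fn n x‖ ^ 2 := tsum_nonneg fun n => sq_nonneg _
    exact le_of_pow_le_pow_left₀ two_ne_zero hA.le (by linarith)
  -- summability of the tail terms
  have hsummul : ∀ x ∈ Λ, Summable fun n => ‖t n * fn n x‖ := by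
    intro x hx
    refine Summable.of_nonneg_of_le (fun n => norm_nonneg _) (fun n => ?_)
      ((ht.add (hptsum x hx)).div_const 2)
    rw [norm_mul]
    linarith [sq_nonneg (‖t n‖ - ‖fn n x‖)]
  -- uniform bound on the tail
  have hgB : ∀ x ∈ Λ, ‖g x‖ ≤ B := by
    intro x hx
    have h1 : ‖g x‖ ≤ ∑' n, ‖t n * fn n x‖ := by
      rw [hgdef]; exact norm_tsum_le_tsum_norm (hsummul x hx)
    have h2 : ∑' n, ‖t n * fn n x‖ ≤ ∑' n, (‖t n‖ ^ 2 + ‖fn n x‖ ^ 2) / 2 := by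
      refine Summable.tsum_le_tsum (fun n => ?_) (hsummul x hx) ((ht.add (hptsum x hx)).div_const 2)
      rw [norm_mul]
      linarith [sq_nonneg (‖t n‖ - ‖fn n x‖)]
    have h3 : ∑' n, (‖t n‖ ^ 2 + ‖fn n x‖ ^ 2) / 2
        = (T + ∑' n, ‖fn n x‖ ^ 2) / 2 := by
      rw [tsum_div_const, Summable.tsum_add ht (hptsum x hx), hTdef]
    have h4 : ∑' n, ‖fn n x‖ ^ 2 ≤ A ^ 2 := by
      have := hptbound x hx; linarith [sq_nonneg ‖f₁ x‖]
    rw [h3] at h2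
    rw [hBdef]
    linarith
  -- measurability of the tail on Λ
  have hgm : AEStronglyMeasurable g (volume.restrict Λ) := by
    refine aestronglyMeasurable_of_tendsto_ae (f := fun N x => ∑ n ∈ Finset.range N, t n * fn n x)
      atTop (fun N => ?_) ?_
    · exact (Finset.measurable_sum _ fun n _ => ((hfnmeas n).const_mul _)).aestronglyMeasurable
    · refine (ae_restrict_iff' hΛmeas).2 (ae_of_all _ fun x hx => ?_)
      have := ((Summable.of_norm (hsummul x hx)).hasSum).tendsto_sum_nat
      simpa only [hgdef] using this
  have hφeq : ∀ u y, φ u y = tu u * f₁ y + g y := by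
    intro u y; rw [hφ, hgdef]
  have hφm : ∀ u, AEStronglyMeasurable (φ u) (volume.restrict Λ) := by
    intro u
    have heq : φ u = fun y => tu u * f₁ y + g y := funext fun y => hφeq u y
    rw [heq]
    exact ((hf₁meas.const_mul _).aestronglyMeasurable).add hgm
  -- volume facts
  have hVfin : volume Λ < ⊤ := hΛbdd.measure_lt_top
  set V : ℝ := (volume Λ).toReal with hVdef
  have hVpos : 0 < V := ENNReal.toReal_pos hΛpos.ne' hVfin.ne
  -- integrability helper
  have integ : ∀ (h : EuclideanSpace ℝ (Fin d) → ℝ),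
      AEStronglyMeasurable h (volume.restrict Λ) →
      ∀ c : ℝ, (∀ x ∈ Λ, |h x| ≤ c) → IntegrableOn h Λ volume := by
    intro h hm c hc
    have hcint : IntegrableOn (fun _ => c) Λ volume := integrableOn_const hVfin.ne
    refine hcint.mono' hm ((ae_restrict_iff' hΛmeas).2 (ae_of_all _ fun x hx => ?_))
    simpa using hc x hx
  set I1 : ℝ := ∫ x in Λ, ‖f₁ x‖ ^ 2 with hI1def
  have hI1int : IntegrableOn (fun x => ‖f₁ x‖ ^ 2) Λ volume := by
    refine integ _ ((hf₁meas.norm.pow_const 2).aestronglyMeasurable) (A ^ 2) fun x hx => ?_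
    rw [_root_.abs_of_nonneg (sq_nonneg (‖f₁ x‖))]
    exact pow_le_pow_left₀ (norm_nonneg _) (hk x hx) 2
  set F : ℝ := nrm f₁ with hFdef
  have hFpos : 0 < F := hf₁pos
  have hF2 : F ^ 2 = I1 := by
    rw [hFdef, hnrm, Real.sq_sqrt (setIntegral_nonneg hΛmeas fun x _ => sq_nonneg _), hI1def]
  clear_value V I1 F
  have hI1pos : 0 < I1 := by
    have := pow_pos hFpos 2; linarith
  set c2 : ℝ := 2 * A * B + 3 * B ^ 2 with hc2def
  have hc2pos : 0 < c2 := by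
    rw [hc2def]; linarith [mul_pos hA hB0, mul_pos hB0 hB0]
  set C : ℝ := c2 * V + 1 with hCdef
  have hCpos : 0 < C := by
    rw [hCdef]; linarith [mul_pos hc2pos hVpos]
  set K : ℝ := 2 * A * C / F ^ 3 + 2 * B / F + 1 with hKdef
  have hKpos : 0 < K := by
    rw [hKdef]
    have h1 : 0 < 2 * A * C / F ^ 3 := div_pos (by linarith [mul_pos hA hCpos]) (pow_pos hFpos 3)
    have h2 : 0 < 2 * B / F := div_pos (by linarith) hFpos
    linarith
  set M : ℝ := max 1 (max (2 * C / I1) (K / ε)) with hMdef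
  have hM1 : (1:ℝ) ≤ M := le_max_left _ _
  have hMC : 2 * C / I1 ≤ M := le_trans (le_max_left _ _) (le_max_right _ _)
  have hMK : K / ε ≤ M := le_trans (le_max_right _ _) (le_max_right _ _)
  clear_value c2 C K M
  have hsγ : 0 < Real.sqrt γ := Real.sqrt_pos.2 hγ
  refine ⟨Real.sqrt γ * M, fun u hu x hx => ?_⟩
  set s : ℝ := Real.sqrt (ρ + u ^ 2 / γ) with hsdef
  have hupos : 0 ≤ u :=
    le_trans (mul_nonneg hsγ.le (le_trans zero_le_one hM1)) hu
  have hsM : M ≤ s := by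
    rw [hsdef]
    have h2 : Real.sqrt (u ^ 2 / γ) = u / Real.sqrt γ := by
      rw [Real.sqrt_div (sq_nonneg u), Real.sqrt_sq hupos]
    have h1 : Real.sqrt (u ^ 2 / γ) ≤ Real.sqrt (ρ + u ^ 2 / γ) := by
      apply Real.sqrt_le_sqrt; linarith
    have h3 : M ≤ u / Real.sqrt γ := by
      rw [le_div_iff₀ hsγ]
      linarith
    linarith [h2 ▸ h1]
  clear_value s
  have hs1 : 1 ≤ s := le_trans hM1 hsM
  have hs0 : 0 < s := lt_of_lt_of_le one_pos hs1
  have htun : ‖tu u‖ = s := by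
    rw [htu, norm_mul, Complex.norm_exp_ofReal_mul_I, one_mul, Complex.norm_real,
      Real.norm_eq_abs, _root_.abs_of_nonneg (Real.sqrt_nonneg _)]
    exact hsdef.symm
  -- pointwise norm bounds on Λ
  have hub : ∀ y ∈ Λ, ‖φ u y‖ ≤ s * ‖f₁ y‖ + B := by
    intro y hy
    rw [hφeq u y]
    calc ‖tu u * f₁ y + g y‖
        ≤ ‖tu u * f₁ y‖ + ‖g y‖ := norm_add_le _ _
      _ = s * ‖f₁ y‖ + ‖g y‖ := by rw [norm_mul, htun]
      _ ≤ s * ‖f₁ y‖ + B := by linarith [hgB y hy]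
  have hlb : ∀ y ∈ Λ, s * ‖f₁ y‖ ≤ ‖φ u y‖ + B := by
    intro y hy
    have h1 : ‖tu u * f₁ y‖ = ‖φ u y - g y‖ := by
      rw [hφeq u y]; congr 1; ring
    have h2 : ‖φ u y - g y‖ ≤ ‖φ u y‖ + ‖g y‖ := norm_sub_le _ _
    rw [norm_mul, htun] at h1
    have := h1 ▸ h2
    linarith [hgB y hy]
  have hub2 : ∀ y ∈ Λ, ‖φ u y‖ ^ 2 ≤ s ^ 2 * ‖f₁ y‖ ^ 2 + s * c2 := by
    intro y hy
    rw [hc2def]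
    have h1 := hub y hy
    have h2 := hk y hy
    have h3 : 0 ≤ ‖φ u y‖ := norm_nonneg _
    have h4 : 0 ≤ ‖f₁ y‖ := norm_nonneg _
    have h5 : 0 ≤ s * ‖f₁ y‖ := mul_nonneg hs0.le h4
    have e1 : ‖φ u y‖ ^ 2 ≤ (s * ‖f₁ y‖ + B) ^ 2 := pow_le_pow_left₀ h3 h1 2
    have e2 : s * ‖f₁ y‖ * B ≤ s * A * B :=
      mul_le_mul_of_nonneg_right (mul_le_mul_of_nonneg_left h2 hs0.le) hB0.le
    have e3 : B ^ 2 ≤ s * B ^ 2 := le_mul_of_one_le_left (sq_nonneg _) hs1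
    have e4 : (0:ℝ) ≤ s * B ^ 2 := mul_nonneg hs0.le (sq_nonneg _)
    linarith [e1, e2, e3, e4]
  have hlb2 : ∀ y ∈ Λ, s ^ 2 * ‖f₁ y‖ ^ 2 - s * c2 ≤ ‖φ u y‖ ^ 2 := by
    intro y hy
    rw [hc2def]
    have h1 := hlb y hy
    have hup := hub y hy
    have h2 := hk y hy
    have h3 : 0 ≤ ‖φ u y‖ := norm_nonneg _
    have h4 : 0 ≤ ‖f₁ y‖ := norm_nonneg _
    have h5 : 0 ≤ s * ‖f₁ y‖ := mul_nonneg hs0.le h4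
    have e1 : (s * ‖f₁ y‖) ^ 2 ≤ (‖φ u y‖ + B) ^ 2 := pow_le_pow_left₀ h5 h1 2
    have hpA : ‖φ u y‖ ≤ s * A + B := by
      have := mul_le_mul_of_nonneg_left h2 hs0.le
      linarith
    have e2 : ‖φ u y‖ * B ≤ (s * A + B) * B := mul_le_mul_of_nonneg_right hpA hB0.le
    have e3 : B ^ 2 ≤ s * B ^ 2 := le_mul_of_one_le_left (sq_nonneg _) hs1
    have e4 : (0:ℝ) ≤ s * B ^ 2 := mul_nonneg hs0.le (sq_nonneg _)
    linarith [e1, e2, e3, e4]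
  -- integral bounds
  set IΦ : ℝ := ∫ y in Λ, ‖φ u y‖ ^ 2 with hIΦdef
  have hφnm : AEStronglyMeasurable (fun y => ‖φ u y‖ ^ 2) (volume.restrict Λ) := by
    have h := (hφm u).norm
    exact h.pow 2
  have hφint : IntegrableOn (fun y => ‖φ u y‖ ^ 2) Λ volume := by
    refine integ _ hφnm (s ^ 2 * A ^ 2 + s * c2) fun y hy => ?_
    rw [_root_.abs_of_nonneg (sq_nonneg (‖φ u y‖))]
    have h2 := hk y hy
    have h4 : 0 ≤ ‖f₁ y‖ := norm_nonneg _
    have hk2 : ‖f₁ y‖ ^ 2 ≤ A ^ 2 := pow_le_pow_left₀ h4 h2 2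
    have hmono : s ^ 2 * ‖f₁ y‖ ^ 2 ≤ s ^ 2 * A ^ 2 :=
      mul_le_mul_of_nonneg_left hk2 (sq_nonneg s)
    linarith [hub2 y hy]
  have hconstint : IntegrableOn (fun _ => s * c2) Λ volume :=
    integrableOn_const hVfin.ne
  have hsum_int : IntegrableOn (fun y => s ^ 2 * ‖f₁ y‖ ^ 2 + s * c2) Λ volume :=
    (hI1int.const_mul (s ^ 2)).add hconstint
  have hrhs : (∫ y in Λ, (s ^ 2 * ‖f₁ y‖ ^ 2 + s * c2) ∂volume)
      = s ^ 2 * I1 + s * c2 * V := by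
    rw [integral_add (hI1int.const_mul (s ^ 2)) hconstint, integral_const_mul,
      setIntegral_const, smul_eq_mul, ← hI1def, measureReal_def, ← hVdef]
    ring
  have hIub : IΦ ≤ s ^ 2 * I1 + s * c2 * V := by
    have h := setIntegral_mono_on hφint hsum_int hΛmeas fun y hy => hub2 y hy
    rw [hrhs] at h
    rw [hIΦdef]
    exact h
  have hdiff_int : IntegrableOn (fun y => s ^ 2 * ‖f₁ y‖ ^ 2 - s * c2) Λ volume :=
    (hI1int.const_mul (s ^ 2)).sub hconstint
  have hlhs : (∫ y in Λ, (s ^ 2 * ‖f₁ y‖ ^ 2 - s * c2) ∂volume)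
      = s ^ 2 * I1 - s * c2 * V := by
    rw [integral_sub (hI1int.const_mul (s ^ 2)) hconstint, integral_const_mul,
      setIntegral_const, smul_eq_mul, ← hI1def, measureReal_def, ← hVdef]
    ring
  have hIlb : s ^ 2 * I1 - s * c2 * V ≤ IΦ := by
    have h := setIntegral_mono_on hdiff_int hφint hΛmeas fun y hy => hlb2 y hy
    rw [hlhs] at h
    rw [hIΦdef]
    exact h
  have hIΦ0 : 0 ≤ IΦ := by
    rw [hIΦdef]; exact setIntegral_nonneg hΛmeas fun y _ => sq_nonneg _
  set N : ℝ := nrm (φ u) with hNdef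
  have hNs : N = Real.sqrt IΦ := by rw [hNdef, hnrm, hIΦdef]
  clear_value IΦ N
  have hN2 : N ^ 2 = IΦ := by rw [hNs]; exact Real.sq_sqrt hIΦ0
  have hN0 : 0 ≤ N := by rw [hNs]; exact Real.sqrt_nonneg _
  have hc2C : s * c2 * V ≤ s * C := by
    rw [hCdef]; linarith [hs0.le]
  have hsC : 2 * C / I1 ≤ s := le_trans hMC hsM
  have hCs : 2 * C ≤ s * I1 := by
    rw [div_le_iff₀ hI1pos] at hsC; linarith
  have hNlow : s * F / 2 ≤ N := by
    rw [hNs]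
    apply Real.le_sqrt_of_sq_le
    have h1 : s ^ 2 * I1 - s * C ≤ IΦ := by linarith
    have e1 : s * (2 * C) ≤ s * (s * I1) := mul_le_mul_of_nonneg_left hCs hs0.le
    have e2 : s ^ 2 * F ^ 2 = s ^ 2 * I1 := by rw [hF2]
    linarith [h1, e1, e2, mul_nonneg (sq_nonneg s) hI1pos.le]
  have hNpos : 0 < N := lt_of_lt_of_le (by linarith [mul_pos hs0 hFpos]) hNlow
  have habs1 : N ^ 2 ≤ s ^ 2 * F ^ 2 + s * C := by
    rw [hN2, hF2]; linarith
  have habs2 : s ^ 2 * F ^ 2 ≤ N ^ 2 + s * C := by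
    rw [hN2, hF2]; linarith
  have hd1 : N ≤ s * F + C / F := by
    apply le_of_pow_le_pow_left₀ two_ne_zero
      (by linarith [mul_pos hs0 hFpos, div_pos hCpos hFpos])
    have hexp : (s * F + C / F) ^ 2 = s ^ 2 * F ^ 2 + 2 * s * C + C ^ 2 / F ^ 2 := by
      field_simp
      ring
    rw [hexp]
    have h0 : (0:ℝ) ≤ C ^ 2 / F ^ 2 := div_nonneg (sq_nonneg _) (sq_nonneg _)
    linarith [habs1, (mul_pos hs0 hCpos).le, h0]
  have hd2 : s * F ≤ N + C / F := by
    apply le_of_pow_le_pow_left₀ two_ne_zero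
      (by linarith [hN0, div_pos hCpos hFpos])
    have hsF : s * F ≤ 2 * N := by linarith
    have hCF : (0:ℝ) ≤ C / F := (div_pos hCpos hFpos).le
    have hcancel : (s * F) * (C / F) = s * C := by
      field_simp
    have h2NC : s * C ≤ 2 * N * (C / F) := by
      rw [← hcancel]
      exact mul_le_mul_of_nonneg_right hsF hCF
    linarith [sq_nonneg (C / F), h2NC, habs2]
  -- the complex decomposition
  have hNne : (N : ℂ) ≠ 0 := Complex.ofReal_ne_zero.2 hNpos.ne'
  have hFne : (F : ℂ) ≠ 0 := Complex.ofReal_ne_zero.2 hFpos.ne'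
  have hsplit : φ u x / (N : ℂ) - Complex.exp (θ * I) * f₁ x / (F : ℂ)
      = Complex.exp (θ * I) * f₁ x * (((s / N - 1 / F : ℝ)) : ℂ) + g x / (N : ℂ) := by
    rw [hφeq u x, htu, ← hsdef]
    push_cast
    field_simp
    ring
  have hnorm1 : ‖Complex.exp (θ * I) * f₁ x * (((s / N - 1 / F : ℝ)) : ℂ)‖
      ≤ A * |s / N - 1 / F| := by
    rw [norm_mul, norm_mul, Complex.norm_exp_ofReal_mul_I, one_mul, Complex.norm_real,
      Real.norm_eq_abs]
    exact mul_le_mul_of_nonneg_right (hk x hx) (abs_nonneg _)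
  have hnorm2 : ‖g x / (N : ℂ)‖ ≤ B / N := by
    rw [norm_div, Complex.norm_real, Real.norm_eq_abs, _root_.abs_of_pos hNpos]
    exact (div_le_div_iff_of_pos_right hNpos).mpr (hgB x hx)
  have hq : |s / N - 1 / F| ≤ (C / F) / (N * F) := by
    have heq : s / N - 1 / F = (s * F - N) / (N * F) := by
      field_simp
    rw [heq, _root_.abs_div, _root_.abs_of_pos (mul_pos hNpos hFpos)]
    exact (div_le_div_iff_of_pos_right (mul_pos hNpos hFpos)).mpr
      (abs_le.mpr ⟨by linarith, by linarith⟩)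
  have hsKε : K / ε ≤ s := le_trans hMK hsM
  have hsF2pos : (0:ℝ) < s * F / 2 := by linarith [mul_pos hs0 hFpos]
  have hsFFpos : (0:ℝ) < (s * F / 2) * F := mul_pos hsF2pos hFpos
  calc ‖φ u x / (N : ℂ) - Complex.exp (θ * I) * f₁ x / (F : ℂ)‖
      ≤ ‖Complex.exp (θ * I) * f₁ x * (((s / N - 1 / F : ℝ)) : ℂ)‖ + ‖g x / (N : ℂ)‖ := by
        rw [hsplit]; exact norm_add_le _ _
    _ ≤ A * ((C / F) / (N * F)) + B / N := by
        refine add_le_add (le_trans hnorm1 ?_) hnorm2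
        exact mul_le_mul_of_nonneg_left hq hA.le
    _ ≤ A * ((C / F) / ((s * F / 2) * F)) + B / (s * F / 2) := by
        refine add_le_add (mul_le_mul_of_nonneg_left ?_ hA.le) ?_
        · exact div_le_div_of_nonneg_left (div_pos hCpos hFpos).le hsFFpos
            (mul_le_mul_of_nonneg_right hNlow hFpos.le)
        · exact div_le_div_of_nonneg_left hB0.le hsF2pos hNlow
    _ = (2 * A * C / F ^ 3 + 2 * B / F) / s := by
        field_simp
    _ ≤ K / s := by
        have hnum : 2 * A * C / F ^ 3 + 2 * B / F ≤ K := by rw [hKdef]; linarith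
        exact (div_le_div_iff_of_pos_right hs0).mpr hnum
    _ ≤ ε := by
        rw [div_le_iff₀ hε] at hsKε
        rw [div_le_iff₀ hs0]
        linarith
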